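/- arXiv:2103.10347 — 2 statements merged into one kernel-verified Lean document; each statement's English description precedes it below -/
import Mathlib

section
/- Let λ > −1/2 with λ ≠ 0, let q > 0 with q not a natural number, set m = ⌈q⌉, and let j ∈ ℕ with j ≥ m. Then for every x > 0 the Caputo fractional derivative of order q of the shifted monic ultraspherical polynomial Č_j^λ satisfies D^q Č_j^λ(x) = H_j · Σ_{r=0}^{⌊j/2⌋} Σ_{k=m}^{j−2r} (−1)^{j−r−k} · Γ(j−r+λ) · 2^{j−2r+k} / (Γ(λ) · r! · Γ(k−q+1) · (j−2r−k)!) · x^{k−q}, where an inner sum is empty whenever j−2r < m. -/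
open Real Polynomial MeasureTheory

/-- Gegenbauer (ultraspherical) polynomials defined by the three-term recurrence
`C_0 = 1`, `C_1 = 2λt`, `(j+1)C_{j+1} = 2(j+λ) t C_j - (j+2λ-1) C_{j-1}`. -/
noncomputable def gegen (lam : ℝ) : ℕ → Polynomial ℝ
  | 0 => 1
  | 1 => Polynomial.C (2 * lam) * Polynomial.X
  | (j + 2) =>
      Polynomial.C (2 * ((j : ℝ) + 1 + lam) / ((j : ℝ) + 2)) * Polynomial.X * gegen lam (j + 1)
        - Polynomial.C (((j : ℝ) + 1 + 2 * lam - 1) / ((j : ℝ) + 2)) * gegen lam j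

/-- `H_j = 2^(-2j) j! Γ(λ) / Γ(j+λ)`. -/
noncomputable def Hcoef (lam : ℝ) (j : ℕ) : ℝ :=
  (j.factorial : ℝ) * Real.Gamma lam / (4 ^ j * Real.Gamma ((j : ℝ) + lam))

/-- Shifted monic ultraspherical polynomial `Č_j^λ(x) = H_j C_j^λ(2x-1)`. -/
noncomputable def shiftedMonicUltra (lam : ℝ) (j : ℕ) : Polynomial ℝ :=
  Polynomial.C (Hcoef lam j) * (gegen lam j).comp (Polynomial.C 2 * Polynomial.X - 1)

/-- Caputo fractional derivative of order `q` (with `m = ⌈q⌉`). -/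
noncomputable def caputo (q : ℝ) (f : ℝ → ℝ) (x : ℝ) : ℝ :=
  (1 / Real.Gamma ((⌈q⌉₊ : ℝ) - q)) *
    ∫ t in (0:ℝ)..x, (x - t) ^ ((⌈q⌉₊ : ℝ) - q - 1) * iteratedDeriv ⌈q⌉₊ f t

lemma descFactorial_cast_succ (n m : ℕ) :
    ((n.descFactorial (m+1) : ℝ)) = n * ((n-1).descFactorial m) := by
  cases n with
  | zero => simp
  | succ n => rw [Nat.succ_descFactorial_succ]; push_cast; simp

lemma iteratedDeriv_sum_monomials {ι : Type*} (s : Finset ι) (m : ℕ) :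
    ∀ (c : ι → ℝ) (e : ι → ℕ),
    iteratedDeriv m (fun y : ℝ => ∑ i ∈ s, c i * y ^ e i) =
      fun t => ∑ i ∈ s, c i * ((e i).descFactorial m : ℝ) * t ^ (e i - m) := by
  induction m with
  | zero => intro c e; simp [iteratedDeriv_zero]
  | succ m ih =>
    intro c e
    rw [iteratedDeriv_succ']
    have hderiv : deriv (fun y : ℝ => ∑ i ∈ s, c i * y ^ e i)
        = fun y => ∑ i ∈ s, (c i * e i) * y ^ (e i - 1) := by
      funext y
      rw [deriv_fun_sum (fun i _ => ((differentiable_pow (e i)).differentiableAt.const_mul _))]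
      refine Finset.sum_congr rfl fun i _ => ?_
      rw [deriv_const_mul _ (differentiable_pow (e i)).differentiableAt, deriv_pow_field]
      ring
    rw [hderiv, ih (fun i => c i * e i) (fun i => e i - 1)]
    funext t
    refine Finset.sum_congr rfl fun i _ => ?_
    rw [descFactorial_cast_succ]
    have h : e i - 1 - m = e i - (m+1) := by omega
    rw [h]; ring

lemma real_beta (p : ℝ) (hp : 0 < p) (n : ℕ) :
    ∫ s in (0:ℝ)..1, s ^ (p - 1) * (1 - s) ^ n =
      (n.factorial : ℝ) / ∏ j ∈ Finset.range (n + 1), (p + j) := by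
  have h1 : Complex.betaIntegral p (n+1) =
      ((∫ s in (0:ℝ)..1, s ^ (p - 1) * (1 - s) ^ n : ℝ) : ℂ) := by
    rw [← intervalIntegral.integral_ofReal, Complex.betaIntegral]
    refine intervalIntegral.integral_congr fun s hs => ?_
    rw [Set.uIcc_of_le (by norm_num : (0:ℝ) ≤ 1)] at hs
    rw [Complex.ofReal_mul, Complex.ofReal_cpow hs.1, Complex.ofReal_pow]
    push_cast
    rw [show ((n:ℂ) + 1 - 1) = (n:ℂ) by ring, Complex.cpow_natCast]
  have h2 := Complex.betaIntegral_eval_nat_add_one_right (u := (p:ℂ)) (by simpa using hp) n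
  rw [h1] at h2
  have h3 : ((n.factorial : ℂ) / ∏ j ∈ Finset.range (n + 1), ((p:ℂ) + j)) =
      (((n.factorial : ℝ) / ∏ j ∈ Finset.range (n + 1), (p + j) : ℝ) : ℂ) := by
    push_cast
    rfl
  rw [h3] at h2
  exact_mod_cast h2

lemma integral_beta_scaled (x p : ℝ) (hx : 0 < x) (hp : 0 < p) (n : ℕ) :
    ∫ t in (0:ℝ)..x, (x - t) ^ (p - 1) * t ^ n =
      (n.factorial : ℝ) / (∏ j ∈ Finset.range (n+1), (p + j)) * x ^ (p + (n:ℝ)) := by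
  have hA : (∫ t in (0:ℝ)..x, (x - t) ^ (p - 1) * t ^ n)
      = ∫ t in (0:ℝ)..x, t ^ (p - 1) * (x - t) ^ n := by
    have := intervalIntegral.integral_comp_sub_left
      (fun t => t ^ (p - 1) * (x - t) ^ n) x (a := 0) (b := x)
    simpa using this
  have hB : (∫ s in (0:ℝ)..1, (fun t => t ^ (p - 1) * (x - t) ^ n) (x * s))
      = x⁻¹ • ∫ t in (0:ℝ)..x, t ^ (p - 1) * (x - t) ^ n := by
    simpa using intervalIntegral.integral_comp_mul_left
      (fun t => t ^ (p - 1) * (x - t) ^ n) hx.ne' (a := 0) (b := 1)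
  have hC : (∫ s in (0:ℝ)..1, (fun t => t ^ (p - 1) * (x - t) ^ n) (x * s))
      = x ^ (p-1) * x ^ (n:ℝ) * ∫ s in (0:ℝ)..1, s ^ (p - 1) * (1 - s) ^ n := by
    rw [← intervalIntegral.integral_const_mul]
    refine intervalIntegral.integral_congr fun s hs => ?_
    rw [Set.uIcc_of_le (by norm_num : (0:ℝ) ≤ 1)] at hs
    simp only
    rw [Real.mul_rpow hx.le hs.1, show x - x * s = x * (1 - s) by ring, mul_pow,
      ← Real.rpow_natCast x n]
    ring
  rw [hC, real_beta p hp n] at hB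
  have hpow : x ^ (p + (n:ℝ)) = x * (x ^ (p-1) * x ^ (n:ℝ)) := by
    rw [← Real.rpow_add hx, show p + (n:ℝ) = 1 + (p - 1 + (n:ℝ)) by ring,
      Real.rpow_add hx, Real.rpow_one]
  rw [hA]
  calc ∫ t in (0:ℝ)..x, t ^ (p - 1) * (x - t) ^ n
      = x * (x⁻¹ • ∫ t in (0:ℝ)..x, t ^ (p - 1) * (x - t) ^ n) := by
        rw [smul_eq_mul, ← mul_assoc, mul_inv_cancel₀ hx.ne', one_mul]
    _ = x * (x ^ (p-1) * x ^ (n:ℝ) * ((n.factorial : ℝ) / ∏ j ∈ Finset.range (n+1), (p + j))) := by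
        rw [← hB]
    _ = (n.factorial : ℝ) / (∏ j ∈ Finset.range (n+1), (p + j)) * x ^ (p + (n:ℝ)) := by
        rw [hpow]; ring

lemma Gamma_add_nat (p : ℝ) (hp : 0 < p) (n : ℕ) :
    Real.Gamma (p + n + 1) = Real.Gamma p * ∏ j ∈ Finset.range (n+1), (p + j) := by
  induction n with
  | zero =>
    simp only [Nat.cast_zero, add_zero, Finset.prod_range_succ, Finset.prod_range_zero]
    rw [Real.Gamma_add_one hp.ne']; push_cast; ring
  | succ n ih =>
    have h1 : p + (n+1:ℕ) + 1 = (p + n + 1) + 1 := by push_cast; ring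
    have h2 : p + (n:ℝ) + 1 ≠ 0 := by positivity
    rw [h1, Real.Gamma_add_one h2, Finset.prod_range_succ, ih]
    push_cast
    ring

lemma caputo_sum_monomials {ι : Type*} (s : Finset ι) (c : ι → ℝ) (e : ι → ℕ)
    (q x : ℝ) (hq : 0 < q) (hqnat : ∀ n : ℕ, q ≠ n) (hx : 0 < x) :
    caputo q (fun y => ∑ i ∈ s, c i * y ^ e i) x =
      ∑ i ∈ s, c i * (if ⌈q⌉₊ ≤ e i then
        ((e i).factorial : ℝ) / Real.Gamma ((e i : ℝ) - q + 1) * x ^ ((e i : ℝ) - q) else 0) := by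
  set m := ⌈q⌉₊ with hm
  set p : ℝ := (m : ℝ) - q with hpdef
  have hqm : q < m := lt_of_le_of_ne (Nat.le_ceil q) (hqnat m)
  have hp : 0 < p := by simp [hpdef]; linarith
  have hΓp : Real.Gamma p ≠ 0 := (Real.Gamma_pos_of_pos hp).ne'
  have hrpow : IntervalIntegrable (fun t => (x - t) ^ (p - 1)) volume 0 x := by
    have h0 : IntervalIntegrable (fun u : ℝ => u ^ (p - 1)) volume x 0 :=
      intervalIntegral.intervalIntegrable_rpow' (by linarith)
    simpa using h0.comp_sub_left x
  rw [caputo, ← hm]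
  rw [iteratedDeriv_sum_monomials s m c e]
  have hint : ∀ i ∈ s, IntervalIntegrable
      (fun t => (x - t) ^ (p - 1) * (c i * ((e i).descFactorial m : ℝ) * t ^ (e i - m)))
      volume 0 x :=
    fun i _ => hrpow.mul_continuousOn (Continuous.continuousOn (by continuity))
  have : (∫ t in (0:ℝ)..x, (x - t) ^ (p - 1) *
        ∑ i ∈ s, c i * ((e i).descFactorial m : ℝ) * t ^ (e i - m))
      = ∑ i ∈ s, ∫ t in (0:ℝ)..x,
          (x - t) ^ (p - 1) * (c i * ((e i).descFactorial m : ℝ) * t ^ (e i - m)) := by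
    rw [← intervalIntegral.integral_finset_sum hint]
    congr 1
    funext t
    rw [Finset.mul_sum]
  rw [this, Finset.mul_sum]
  refine Finset.sum_congr rfl fun i _ => ?_
  have hone : (∫ t in (0:ℝ)..x,
      (x - t) ^ (p - 1) * (c i * ((e i).descFactorial m : ℝ) * t ^ (e i - m)))
      = c i * ((e i).descFactorial m : ℝ) *
        ∫ t in (0:ℝ)..x, (x - t) ^ (p - 1) * t ^ (e i - m) := by
    rw [← intervalIntegral.integral_const_mul]
    congr 1; funext t; ring
  rw [hone, integral_beta_scaled x p hx hp (e i - m)]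
  by_cases hcase : m ≤ e i
  · rw [if_pos hcase]
    have hfact : ((e i).descFactorial m : ℝ) * ((e i - m).factorial : ℝ) = ((e i).factorial : ℝ) := by
      rw [← Nat.cast_mul, mul_comm, Nat.factorial_mul_descFactorial hcase]
    have hΓ : Real.Gamma ((e i : ℝ) - q + 1) =
        Real.Gamma p * ∏ j ∈ Finset.range ((e i - m) + 1), (p + j) := by
      rw [← Gamma_add_nat p hp (e i - m)]
      congr 1
      have : ((e i - m : ℕ) : ℝ) = (e i : ℝ) - m := by
        push_cast [hcase]; ring
      rw [this, hpdef]; ring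
    have hxpow : x ^ (p + ((e i - m : ℕ) : ℝ)) = x ^ ((e i : ℝ) - q) := by
      congr 1
      have : ((e i - m : ℕ) : ℝ) = (e i : ℝ) - m := by push_cast [hcase]; ring
      rw [this, hpdef]; ring
    have hprod : (0:ℝ) < ∏ j ∈ Finset.range ((e i - m) + 1), (p + j) := by
      apply Finset.prod_pos; intro j _; positivity
    rw [hxpow, hΓ]
    field_simp
    rw [← hpdef, mul_div_assoc, div_self hΓp, mul_one, ← hfact]; ring
  · rw [if_neg hcase]
    have : (e i).descFactorial m = 0 := Nat.descFactorial_eq_zero_iff_lt.mpr (by omega)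
    simp [this]

noncomputable def Acoef (lam : ℝ) (n r : ℕ) : ℝ :=
  if 2 * r ≤ n then
    (-1:ℝ)^r * Real.Gamma ((n:ℝ) - r + lam) * 2 ^ (n - 2*r) /
      (Real.Gamma lam * (r.factorial : ℝ) * ((n - 2*r).factorial : ℝ))
  else 0

section
variable {lam : ℝ} (hlam : -1/2 < lam) (hlam0 : lam ≠ 0)
include hlam hlam0

lemma add_lam_ne (k : ℕ) : ((k:ℝ) + lam) ≠ 0 := by
  rcases Nat.eq_zero_or_pos k with h | h
  · subst h; simpa using hlam0
  · have : (1:ℝ) ≤ (k:ℝ) := by exact_mod_cast h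
    intro hc; have : lam = -(k:ℝ) := by linarith
    rw [this] at hlam; linarith

lemma Gamma_add_lam_ne (k : ℕ) : Real.Gamma ((k:ℝ) + lam) ≠ 0 := by
  apply Real.Gamma_ne_zero
  intro m hc
  rcases Nat.eq_zero_or_pos m with h | h
  · subst h; simp at hc; exact add_lam_ne hlam hlam0 k hc
  · have h1 : (1:ℝ) ≤ (m:ℝ) := by exact_mod_cast h
    have h2 : (0:ℝ) ≤ (k:ℝ) := by positivity
    nlinarith [hc]

lemma Gamma_lam_ne : Real.Gamma lam ≠ 0 := by
  simpa using Gamma_add_lam_ne hlam hlam0 0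

lemma key0 (j : ℕ) :
    Acoef lam (j+2) 0 = (2 * ((j : ℝ) + 1 + lam) / ((j : ℝ) + 2)) * Acoef lam (j+1) 0 := by
  rw [Acoef, Acoef, if_pos (by omega), if_pos (by omega)]
  have hG : Real.Gamma (((j+2:ℕ):ℝ) - (0:ℕ) + lam)
      = (((j:ℝ)+1+lam)) * Real.Gamma (((j+1:ℕ):ℝ) - (0:ℕ) + lam) := by
    push_cast
    have hne : (j:ℝ) + 1 - 0 + lam ≠ 0 := by
      have := add_lam_ne hlam hlam0 (j+1)
      push_cast at this
      intro hc; apply this; linarith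
    rw [show (j:ℝ) + 2 - 0 + lam = ((j:ℝ) + 1 - 0 + lam) + 1 by ring, Real.Gamma_add_one hne]
    ring
  rw [hG]
  have e1 : j + 2 - 2*0 = (j+1) + 1 := by omega
  have e2 : j + 1 - 2*0 = j + 1 := by omega
  rw [e1, e2, Nat.factorial_succ, pow_succ]
  have hL := Gamma_lam_ne hlam hlam0
  have hF : ((j+1).factorial : ℝ) ≠ 0 := by positivity
  have hj2 : ((j:ℝ) + 2) ≠ 0 := by positivity
  field_simp
  push_cast
  ring

lemma key1 (j r' : ℕ) (h : 2*(r'+1) ≤ j+2) :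
    Acoef lam (j+2) (r'+1) =
      (2 * ((j : ℝ) + 1 + lam) / ((j : ℝ) + 2)) * Acoef lam (j+1) (r'+1)
        - (((j : ℝ) + 1 + 2 * lam - 1) / ((j : ℝ) + 2)) * Acoef lam j r' := by
  have hL := Gamma_lam_ne hlam hlam0
  have hj2 : ((j:ℝ) + 2) ≠ 0 := by positivity
  by_cases hA : 2*(r'+1) ≤ j+1
  · -- generic case
    have hr'j : r' ≤ j := by omega
    set X : ℝ := (j:ℝ) - r' + lam with hX
    have hXcast : X = ((j - r' : ℕ) : ℝ) + lam := by
      rw [hX]; push_cast [hr'j]; ring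
    have hXne : X ≠ 0 := by rw [hXcast]; exact add_lam_ne hlam hlam0 _
    have hGXne : Real.Gamma X ≠ 0 := by rw [hXcast]; exact Gamma_add_lam_ne hlam hlam0 _
    rw [Acoef, Acoef, Acoef, if_pos (by omega), if_pos (by omega), if_pos (by omega)]
    have hG2 : Real.Gamma (((j+2:ℕ):ℝ) - ((r'+1:ℕ):ℝ) + lam) = X * Real.Gamma X := by
      push_cast
      rw [show (j:ℝ) + 2 - ((r':ℝ)+1) + lam = X + 1 by rw [hX]; ring, Real.Gamma_add_one hXne]
    have hG1 : Real.Gamma (((j+1:ℕ):ℝ) - ((r'+1:ℕ):ℝ) + lam) = Real.Gamma X := by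
      push_cast
      congr 1
      rw [hX]; ring
    have hG0 : Real.Gamma ((j:ℝ) - ((r':ℕ):ℝ) + lam) = Real.Gamma X := by rw [hX]
    rw [hG2, hG1, hG0]
    set a := j - 1 - 2*r' with ha
    have e1 : j + 2 - 2*(r'+1) = a + 1 := by omega
    have e2 : j + 1 - 2*(r'+1) = a := by omega
    have e3 : j - 2*r' = a + 1 := by omega
    rw [e1, e2, e3, Nat.factorial_succ (a), Nat.factorial_succ r', pow_succ (2:ℝ) a,
      pow_succ (-1:ℝ) r']
    have hFa : ((a).factorial : ℝ) ≠ 0 := by positivity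
    have hFr : ((r').factorial : ℝ) ≠ 0 := by positivity
    have ha1 : ((a:ℝ) + 1) ≠ 0 := by positivity
    have hr1 : ((r':ℝ) + 1) ≠ 0 := by positivity
    have hkey : ((j:ℝ)+2) * X =
        ((j:ℝ)+1+lam) * ((a:ℝ)+1) + ((j:ℝ)+2*lam) * ((r':ℝ)+1) := by
      have haj : (a:ℝ) = (j:ℝ) - 1 - 2*r' := by
        rw [ha]; push_cast [show 2*r' ≤ j - 1 by omega, show 1 ≤ j by omega]; ring
      rw [haj, hX]; ring
    push_cast
    field_simp
    linear_combination (-1:ℝ) * hkey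
  · -- boundary: 2*(r'+1) = j+2, j = 2*r'
    have hj : j = 2*r' := by omega
    subst hj
    rw [Acoef, Acoef, Acoef, if_pos (by omega), if_neg (by omega), if_pos (by omega)]
    set X : ℝ := (r':ℝ) + lam with hX
    have hXne : X ≠ 0 := add_lam_ne hlam hlam0 r'
    have hGXne : Real.Gamma X ≠ 0 := Gamma_add_lam_ne hlam hlam0 r'
    have hG2 : Real.Gamma (((2*r'+2:ℕ):ℝ) - ((r'+1:ℕ):ℝ) + lam) = X * Real.Gamma X := by
      push_cast
      rw [show 2*(r':ℝ) + 2 - ((r':ℝ)+1) + lam = X + 1 by rw [hX]; ring,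
        Real.Gamma_add_one hXne]
    have hG0' : Real.Gamma (((2*r' : ℕ):ℝ) - ((r':ℕ):ℝ) + lam) = Real.Gamma X := by
      congr 1; push_cast; rw [hX]; ring
    rw [hG2]
    have e1 : 2*r' + 2 - 2*(r'+1) = 0 := by omega
    have e2 : 2*r' - 2*r' = 0 := by omega
    rw [e1, e2, hG0']
    rw [Nat.factorial_succ r', pow_succ (-1:ℝ) r']
    have hFr : ((r').factorial : ℝ) ≠ 0 := by positivity
    have hr1 : ((r':ℝ) + 1) ≠ 0 := by positivity
    push_cast
    push_cast at hj2
    field_simp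
    rw [hX]
    ring
end

lemma Acoef_zero {lam : ℝ} {n r : ℕ} (h : n < 2*r) : Acoef lam n r = 0 := by
  rw [Acoef, if_neg (by omega)]

lemma Acoef_pad {lam : ℝ} (n N : ℕ) (hN : n/2+1 ≤ N) (t : ℝ) :
    ∑ r ∈ Finset.range (n/2+1), Acoef lam n r * t ^ (n - 2*r)
      = ∑ r ∈ Finset.range N, Acoef lam n r * t ^ (n - 2*r) := by
  refine Finset.sum_subset (Finset.range_subset_range.mpr hN) fun r _ hr => ?_
  rw [Finset.mem_range, not_lt] at hr
  rw [Acoef_zero (by omega), zero_mul]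

lemma gegen_eval {lam : ℝ} (hlam : -1/2 < lam) (hlam0 : lam ≠ 0) (n : ℕ) :
    ∀ t : ℝ, (gegen lam n).eval t
      = ∑ r ∈ Finset.range (n/2+1), Acoef lam n r * t ^ (n - 2*r) := by
  induction n using Nat.strong_induction_on with
  | _ n ih =>
    match n, ih with
    | 0, _ =>
      intro t
      rw [show (0:ℕ)/2+1 = 1 from rfl, Finset.sum_range_one, Acoef, if_pos (by omega)]
      simp [gegen, div_self (Gamma_lam_ne hlam hlam0)]
    | 1, _ =>
      intro t
      rw [show (1:ℕ)/2+1 = 1 from rfl, Finset.sum_range_one, Acoef, if_pos (by omega)]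
      simp only [gegen, eval_mul, eval_C, eval_X, Nat.cast_one, Nat.cast_zero, sub_zero,
        Nat.factorial_zero, Nat.factorial_one]
      simp only [mul_zero, Nat.sub_zero, pow_zero, pow_one, one_mul, mul_one,
        Nat.factorial_one, Nat.cast_one, Nat.cast_zero, sub_zero]
      rw [show (1:ℝ) + lam = lam + 1 by ring, Real.Gamma_add_one hlam0]
      have h : lam * Real.Gamma lam * 2 / Real.Gamma lam = 2 * lam := by
        rw [div_eq_iff (Gamma_lam_ne hlam hlam0)]
        ring
      rw [h]
    | (j+2), ih =>
      intro t
      have E1 := ih (j+1) (by omega) t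
      have E0 := ih j (by omega) t
      simp only [gegen, eval_sub, eval_mul, eval_C, eval_X]
      rw [E1, E0]
      have hM2 : (j+2)/2 + 1 = j/2 + 2 := by omega
      rw [hM2, Acoef_pad (j+1) (j/2+2) (by omega) t]
      have hshift : ∑ r ∈ Finset.range (j/2+2),
              (if r = 0 then 0 else Acoef lam j (r-1) * t ^ (j - 2*(r-1)))
          = ∑ r ∈ Finset.range (j/2+1), Acoef lam j r * t ^ (j - 2*r) := by
        rw [Finset.sum_range_succ']
        simp
      rw [← hshift, Finset.mul_sum, Finset.mul_sum, ← Finset.sum_sub_distrib]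
      refine (Finset.sum_congr rfl fun r hr => ?_)
      rw [Finset.mem_range] at hr
      match r, hr with
      | 0, _ =>
        rw [if_pos rfl]
        have e1 : j + 2 - 2*0 = (j + 1 - 2*0) + 1 := by omega
        rw [e1, pow_succ, key0 hlam hlam0 j]
        ring
      | (r'+1), hr =>
        have hrange : 2*(r'+1) ≤ j+2 := by omega
        rw [if_neg (Nat.succ_ne_zero r'), Nat.add_sub_cancel, key1 hlam hlam0 j r' hrange]
        by_cases hb : 2*(r'+1) ≤ j+1
        · have e1 : j + 2 - 2*(r'+1) = (j + 1 - 2*(r'+1)) + 1 := by omega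
          have e2 : j - 2*r' = (j + 1 - 2*(r'+1)) + 1 := by omega
          rw [e1, e2, pow_succ]
          ring
        · have hz : Acoef lam (j+1) (r'+1) = 0 := Acoef_zero (by omega)
          have e1 : j + 2 - 2*(r'+1) = 0 := by omega
          have e2 : j - 2*r' = 0 := by omega
          rw [hz, e1, e2]
          ring

/-- Theorem 3.2: Caputo fractional derivative of the shifted monic ultraspherical
polynomial in explicit form. -/
theorem caputo_shiftedMonicUltra_analytic (lam q : ℝ) (hlam : -1/2 < lam) (hlam0 : lam ≠ 0)
    (hq : 0 < q) (hqnat : ∀ n : ℕ, q ≠ n) (j : ℕ) (hj : ⌈q⌉₊ ≤ j) (x : ℝ) (hx : 0 < x) :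
    caputo q (fun y => (shiftedMonicUltra lam j).eval y) x =
      Hcoef lam j * ∑ r ∈ Finset.range (j / 2 + 1), ∑ k ∈ Finset.Icc ⌈q⌉₊ (j - 2 * r),
        (-1 : ℝ) ^ (j - r - k) * Real.Gamma ((j : ℝ) - r + lam) * 2 ^ (j - 2 * r + k) /
          (Real.Gamma lam * (r.factorial : ℝ) * Real.Gamma ((k : ℝ) - q + 1) *
            ((j - 2 * r - k).factorial : ℝ)) * x ^ ((k : ℝ) - q) := by
  classical
  have hqm : q < (⌈q⌉₊ : ℝ) := lt_of_le_of_ne (Nat.le_ceil q) (hqnat ⌈q⌉₊)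
  set S : Finset ((_ : ℕ) × ℕ) :=
    (Finset.range (j/2+1)).sigma (fun r => Finset.range (j - 2*r + 1)) with hS
  set cc : ((_ : ℕ) × ℕ) → ℝ := fun i =>
    Hcoef lam j * (Acoef lam j i.1 *
      ((-1:ℝ)^(i.2 + (j - 2*i.1)) * 2^i.2 * (((j - 2*i.1).choose i.2 : ℕ) : ℝ))) with hcc
  set ee : ((_ : ℕ) × ℕ) → ℕ := fun i => i.2 with hee
  have hfun : (fun y => (shiftedMonicUltra lam j).eval y)
      = fun y => ∑ i ∈ S, cc i * y ^ ee i := by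
    funext y
    rw [shiftedMonicUltra, eval_mul, eval_C, eval_comp]
    simp only [eval_sub, eval_mul, eval_C, eval_X, eval_one]
    rw [gegen_eval hlam hlam0 j (2*y - 1), hS, Finset.sum_sigma, Finset.mul_sum]
    refine Finset.sum_congr rfl fun r _ => ?_
    rw [sub_pow (2*y) 1 (j - 2*r), Finset.mul_sum, Finset.mul_sum]
    refine Finset.sum_congr rfl fun k _ => ?_
    rw [hcc, hee]
    simp only [one_pow, mul_pow]
    ring
  rw [hfun, caputo_sum_monomials S cc ee q x hq hqnat hx, hS, Finset.sum_sigma,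
    Finset.mul_sum]
  refine Finset.sum_congr rfl fun r hr => ?_
  rw [Finset.mem_range, Nat.lt_succ_iff] at hr
  have h2r : 2*r ≤ j := by omega
  have hfilter : Finset.filter (fun k => ⌈q⌉₊ ≤ k) (Finset.range (j - 2*r + 1))
      = Finset.Icc ⌈q⌉₊ (j - 2*r) := by
    ext k
    simp only [Finset.mem_filter, Finset.mem_range, Finset.mem_Icc, Nat.lt_succ_iff]
    omega
  have hstep : ∑ k ∈ Finset.range (j - 2*r + 1), cc ⟨r, k⟩ *
        (if ⌈q⌉₊ ≤ ee ⟨r, k⟩ then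
          ((ee ⟨r, k⟩).factorial : ℝ) / Real.Gamma ((ee ⟨r, k⟩ : ℝ) - q + 1) *
            x ^ ((ee ⟨r, k⟩ : ℝ) - q) else 0)
      = ∑ k ∈ Finset.Icc ⌈q⌉₊ (j - 2*r), cc ⟨r, k⟩ *
          ((k.factorial : ℝ) / Real.Gamma ((k : ℝ) - q + 1) * x ^ ((k : ℝ) - q)) := by
    rw [← hfilter, Finset.sum_filter]
    refine Finset.sum_congr rfl fun k _ => ?_
    rw [hee]
    simp only [mul_ite, mul_zero]
  rw [hstep, Finset.mul_sum]
  refine Finset.sum_congr rfl fun k hk => ?_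
  rw [Finset.mem_Icc] at hk
  have hkq : q < (k:ℝ) := lt_of_lt_of_le hqm (by exact_mod_cast hk.1)
  have hΓk : Real.Gamma ((k:ℝ) - q + 1) ≠ 0 :=
    (Real.Gamma_pos_of_pos (by linarith)).ne'
  have hsign : (-1:ℝ)^(j - r - k) = (-1:ℝ)^r * (-1:ℝ)^(k + (j - 2*r)) := by
    rw [← pow_add, show r + (k + (j - 2*r)) = (j - r - k) + 2*k by omega, pow_add,
      pow_mul]
    norm_num
  have hfac : (((j - 2*r).factorial : ℕ) : ℝ)
      = (((j - 2*r).choose k : ℕ) : ℝ) * (k.factorial : ℝ) * ((j - 2*r - k).factorial : ℝ) := by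
    exact_mod_cast (Nat.choose_mul_factorial_mul_factorial hk.2).symm
  rw [hcc, hsign]
  simp only
  rw [Acoef, if_pos h2r, pow_add (2:ℝ) (j - 2*r) k, hfac]
  have hL := Gamma_lam_ne hlam hlam0
  have hFr : ((r.factorial : ℕ) : ℝ) ≠ 0 := by positivity
  have hFk : ((k.factorial : ℕ) : ℝ) ≠ 0 := by positivity
  have hFjk : (((j - 2*r - k).factorial : ℕ) : ℝ) ≠ 0 := by positivity
  have hCh : (((j - 2*r).choose k : ℕ) : ℝ) ≠ 0 := by
    have := Nat.choose_pos hk.2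
    positivity
  field_simp
end

section
/- Let λ > −1/2 with λ ≠ 0 and let j ∈ ℕ. Then the shifted monic ultraspherical polynomial admits the analytic form Č_j^λ(x) = H_j · Σ_{r=0}^{⌊j/2⌋} Σ_{k=0}^{j−2r} (−1)^{j−r−k} · Γ(j−r+λ) · 2^{j−2r+k} / (Γ(λ) · r! · k! · (j−2r−k)!) · x^k for all x. -/
open Real Polynomial MeasureTheory

noncomputable def cc (lam : ℝ) (j r : ℕ) : ℝ :=
  if 2*r ≤ j then (-1)^r * Real.Gamma ((j:ℝ) - r + lam) * 2^(j-2*r) /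
      (Real.Gamma lam * (r.factorial : ℝ) * ((j-2*r).factorial : ℝ)) else 0

lemma cc_zero (lam : ℝ) {j r : ℕ} (h : j < 2*r) : cc lam j r = 0 := by
  simp [cc, Nat.not_le.2 h]

lemma gamma_ne (lam : ℝ) (hlam : -1/2 < lam) (hlam0 : lam ≠ 0) (n : ℕ) :
    Real.Gamma ((n:ℝ) + lam) ≠ 0 := by
  apply Real.Gamma_ne_zero
  intro m
  rcases Nat.eq_zero_or_pos m with rfl | hm
  · rcases Nat.eq_zero_or_pos n with rfl | hn
    · simpa using hlam0
    · have : (1:ℝ) ≤ n := by exact_mod_cast hn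
      push_cast
      intro h; linarith
  · have : (1:ℝ) ≤ m := by exact_mod_cast hm
    have h0 : (0:ℝ) ≤ n := n.cast_nonneg
    intro h; linarith

lemma gstep (lam : ℝ) (hlam : -1/2 < lam) (hlam0 : lam ≠ 0) (n : ℕ) :
    Real.Gamma ((n:ℝ) + 1 + lam) = ((n:ℝ) + lam) * Real.Gamma ((n:ℝ) + lam) := by
  have h : (n:ℝ) + 1 + lam = ((n:ℝ) + lam) + 1 := by ring
  rw [h, Real.Gamma_add_one]
  intro h0
  exact gamma_ne lam hlam hlam0 n (by rw [h0]; exact Real.Gamma_zero)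

lemma arg_ne (lam : ℝ) (hlam : -1/2 < lam) (hlam0 : lam ≠ 0) (n : ℕ) :
    (n:ℝ) + lam ≠ 0 := by
  intro h0
  exact gamma_ne lam hlam hlam0 n (by rw [h0]; exact Real.Gamma_zero)

lemma cc_rec (lam : ℝ) (hlam : -1/2 < lam) (hlam0 : lam ≠ 0) (j r : ℕ) (hr : 1 ≤ r) :
    cc lam (j+2) r = (2*((j:ℝ)+1+lam)/((j:ℝ)+2)) * cc lam (j+1) r
      - (((j:ℝ)+1+2*lam-1)/((j:ℝ)+2)) * cc lam j (r-1) := by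
  obtain ⟨s, rfl⟩ : ∃ s, r = s + 1 := ⟨r - 1, by omega⟩
  have hGl : Real.Gamma lam ≠ 0 := by
    have := gamma_ne lam hlam hlam0 0
    simpa using this
  have hj2 : ((j:ℝ) + 2) ≠ 0 := by positivity
  rcases le_or_gt (2*(s+1)) (j+1) with h | h
  · -- main case: all three coefficients present
    obtain ⟨m, hm⟩ : ∃ m, j + 1 = m + 2*(s+1) := ⟨j + 1 - 2*(s+1), by omega⟩
    have e2 : 2*(s+1) ≤ j + 2 := by omega
    have e0 : 2*s ≤ j := by omega
    rw [cc, cc, cc]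
    simp only [Nat.add_sub_cancel]
    rw [if_pos e2, if_pos h, if_pos e0]
    have hmr : (j:ℝ) = (m:ℝ) + 2*(s:ℝ) + 1 := by
      have := congrArg (Nat.cast : ℕ → ℝ) hm; push_cast at this; linarith
    have a1 : ((j+2:ℕ):ℝ) - ((s+1:ℕ):ℝ) + lam = ((m+s+1:ℕ):ℝ) + 1 + lam := by
      push_cast; linarith
    have a2 : ((j+1:ℕ):ℝ) - ((s+1:ℕ):ℝ) + lam = ((m+s+1:ℕ):ℝ) + lam := by
      push_cast; linarith
    have a3 : ((j:ℕ):ℝ) - ((s:ℕ):ℝ) + lam = ((m+s+1:ℕ):ℝ) + lam := by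
      push_cast; linarith
    have b1 : j + 2 - 2*(s+1) = m + 1 := by omega
    have b2 : j + 1 - 2*(s+1) = m := by omega
    have b3 : j - 2*s = m + 1 := by omega
    rw [a1, a2, a3, b1, b2, b3, gstep lam hlam hlam0 (m+s+1)]
    have hfac : ((s+1).factorial : ℝ) = (s+1) * (s.factorial : ℝ) := by
      rw [Nat.factorial_succ]; push_cast; ring
    have hfacm : ((m+1).factorial : ℝ) = (m+1) * (m.factorial : ℝ) := by
      rw [Nat.factorial_succ]; push_cast; ring
    have hs : ((s.factorial:ℝ)) ≠ 0 := by positivity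
    have hm' : ((m.factorial:ℝ)) ≠ 0 := by positivity
    rw [hfac, hfacm, pow_succ]
    field_simp
    push_cast
    rw [hmr]
    ring
  · rcases le_or_gt (2*(s+1)) (j+2) with h2 | h2
    · -- boundary case: 2r = j+2
      have hj : j = 2*s := by omega
      have e0 : 2*s ≤ j := by omega
      rw [cc, cc, cc]
      simp only [Nat.add_sub_cancel]
      rw [if_pos h2, if_neg (by omega), if_pos e0]
      have a1 : ((j+2:ℕ):ℝ) - ((s+1:ℕ):ℝ) + lam = ((s:ℕ):ℝ) + 1 + lam := by
        push_cast; rw [hj]; push_cast; ring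
      have a3 : ((j:ℕ):ℝ) - ((s:ℕ):ℝ) + lam = ((s:ℕ):ℝ) + lam := by
        push_cast; rw [hj]; push_cast; ring
      have b1 : j + 2 - 2*(s+1) = 0 := by omega
      have b3 : j - 2*s = 0 := by omega
      rw [a1, a3, b1, b3, gstep lam hlam hlam0 s]
      have hfac : ((s+1).factorial : ℝ) = (s+1) * (s.factorial : ℝ) := by
        rw [Nat.factorial_succ]; push_cast; ring
      have hs : ((s.factorial:ℝ)) ≠ 0 := by positivity
      rw [hfac]
      have hjc : (j:ℝ) = 2*(s:ℝ) := by rw [hj]; push_cast; ring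
      rw [hjc]
      simp only [Nat.factorial_zero, Nat.cast_one, pow_zero]
      field_simp
      ring
    · -- all zero
      rw [cc_zero lam (by omega), cc_zero lam (by omega), cc_zero lam (by omega)]
      ring

lemma cc_rec0 (lam : ℝ) (hlam : -1/2 < lam) (hlam0 : lam ≠ 0) (j : ℕ) :
    cc lam (j+2) 0 = (2*((j:ℝ)+1+lam)/((j:ℝ)+2)) * cc lam (j+1) 0 := by
  have hGl : Real.Gamma lam ≠ 0 := by
    have := gamma_ne lam hlam hlam0 0
    simpa using this
  have hj2 : ((j:ℝ) + 2) ≠ 0 := by positivity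
  rw [cc, cc, if_pos (by omega), if_pos (by omega)]
  have a1 : ((j+2:ℕ):ℝ) - ((0:ℕ):ℝ) + lam = ((j+1:ℕ):ℝ) + 1 + lam := by push_cast; ring
  have a2 : ((j+1:ℕ):ℝ) - ((0:ℕ):ℝ) + lam = ((j+1:ℕ):ℝ) + lam := by push_cast; ring
  rw [a1, a2, gstep lam hlam hlam0 (j+1)]
  have b1 : j + 2 - 2*0 = j + 2 := by omega
  have b2 : j + 1 - 2*0 = j + 1 := by omega
  rw [b1, b2]
  have hfac : ((j+2).factorial : ℝ) = (j+2) * ((j+1).factorial : ℝ) := by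
    rw [Nat.factorial_succ]; push_cast; ring
  have hf : (((j+1).factorial:ℝ)) ≠ 0 := by positivity
  rw [hfac, pow_succ]
  field_simp
  push_cast
  ring

lemma eval_gegen (lam : ℝ) (hlam : -1/2 < lam) (hlam0 : lam ≠ 0) :
    ∀ j : ℕ, ∀ t : ℝ, (gegen lam j).eval t =
      ∑ r ∈ Finset.range (j+1), cc lam j r * t^(j - 2*r) := by
  have hGl : Real.Gamma lam ≠ 0 := by
    have := gamma_ne lam hlam hlam0 0
    simpa using this
  intro j
  induction j using Nat.strong_induction_on with
  | _ j ih =>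
  match j with
  | 0 =>
    intro t
    simp [gegen, cc]
    field_simp
  | 1 =>
    intro t
    have hg : (gegen lam 1).eval t = 2 * lam * t := by simp [gegen]
    rw [hg, Finset.sum_range_succ, Finset.sum_range_one]
    rw [cc, cc, if_pos (by omega), if_neg (by omega)]
    have h1 : ((1:ℕ):ℝ) - ((0:ℕ):ℝ) + lam = ((0:ℕ):ℝ) + 1 + lam := by push_cast; ring
    rw [h1, gstep lam hlam hlam0 0]
    push_cast
    field_simp
    ring
  | (n + 2) =>
    intro t
    have h1 := ih (n+1) (by omega) t
    have h0 := ih n (by omega) t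
    have heval : (gegen lam (n+2)).eval t =
        (2*((n:ℝ)+1+lam)/((n:ℝ)+2)) * t * (gegen lam (n+1)).eval t
          - (((n:ℝ)+1+2*lam-1)/((n:ℝ)+2)) * (gegen lam n).eval t := by
      rw [gegen]
      simp [mul_assoc]
    rw [heval, h1, h0]
    conv_rhs => rw [Finset.sum_range_succ']
    have hA : 2*((n:ℝ)+1+lam)/((n:ℝ)+2) * t *
        ∑ r ∈ Finset.range (n+1+1), cc lam (n+1) r * t ^ (n+1 - 2*r) =
        (∑ r ∈ Finset.range (n+2),
          2*((n:ℝ)+1+lam)/((n:ℝ)+2) * cc lam (n+1) (r+1) * t ^ (n+2 - 2*(r+1)))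
          + 2*((n:ℝ)+1+lam)/((n:ℝ)+2) * cc lam (n+1) 0 * t ^ (n+2 - 2*0) := by
      rw [Finset.mul_sum, Finset.sum_range_succ']
      congr 1
      · conv_rhs => rw [Finset.sum_range_succ]
        rw [cc_zero lam (show n+1 < 2*(n+1+1) by omega)]
        rw [mul_zero, zero_mul, add_zero]
        apply Finset.sum_congr rfl
        intro r _
        rcases le_or_gt (2*(r+1)) (n+1) with h | h
        · have he : n + 2 - 2*(r+1) = (n + 1 - 2*(r+1)) + 1 := by omega
          rw [he, pow_succ]
          ring
        · rw [cc_zero lam (by omega)]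
          ring
      · have e1 : n + 1 - 2*0 = n + 1 := by omega
        have e2 : n + 2 - 2*0 = (n + 1) + 1 := by omega
        rw [e1, e2, pow_succ]
        ring
    have hB : (((n:ℝ)+1+2*lam-1)/((n:ℝ)+2)) *
        ∑ r ∈ Finset.range (n+1), cc lam n r * t ^ (n - 2*r) =
        ∑ r ∈ Finset.range (n+2),
          (((n:ℝ)+1+2*lam-1)/((n:ℝ)+2)) * cc lam n r * t ^ (n+2 - 2*(r+1)) := by
      rw [Finset.mul_sum]
      conv_rhs => rw [Finset.sum_range_succ]
      rw [cc_zero lam (show n < 2*(n+1) by omega)]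
      rw [mul_zero, zero_mul, add_zero]
      apply Finset.sum_congr rfl
      intro r _
      rcases le_or_gt (2*r) n with h | h
      · have he : n + 2 - 2*(r+1) = n - 2*r := by omega
        rw [he]
        ring
      · rw [cc_zero lam h]
        ring
    rw [hA, hB]
    have hsum : (∑ r ∈ Finset.range (n+2),
          2*((n:ℝ)+1+lam)/((n:ℝ)+2) * cc lam (n+1) (r+1) * t ^ (n+2 - 2*(r+1)))
        - (∑ r ∈ Finset.range (n+2),
          (((n:ℝ)+1+2*lam-1)/((n:ℝ)+2)) * cc lam n r * t ^ (n+2 - 2*(r+1))) =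
        ∑ r ∈ Finset.range (n+2), cc lam (n+2) (r+1) * t ^ (n+2 - 2*(r+1)) := by
      rw [← Finset.sum_sub_distrib]
      apply Finset.sum_congr rfl
      intro r _
      have := cc_rec lam hlam hlam0 n (r+1) (by omega)
      simp only [Nat.add_sub_cancel] at this
      rw [this]
      ring
    have h00 : 2*((n:ℝ)+1+lam)/((n:ℝ)+2) * cc lam (n+1) 0 * t ^ (n+2 - 2*0) =
        cc lam (n+2) 0 * t ^ (n+2 - 2*0) := by
      rw [cc_rec0 lam hlam hlam0 n]
    linarith [hsum, h00]

/-- Analytic form of the shifted monic ultraspherical polynomial. -/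
theorem shiftedMonicUltra_analytic (lam : ℝ) (hlam : -1/2 < lam) (hlam0 : lam ≠ 0)
    (j : ℕ) (x : ℝ) :
    (shiftedMonicUltra lam j).eval x =
      Hcoef lam j * ∑ r ∈ Finset.range (j / 2 + 1), ∑ k ∈ Finset.range (j - 2 * r + 1),
        (-1 : ℝ) ^ (j - r - k) * Real.Gamma ((j : ℝ) - r + lam) * 2 ^ (j - 2 * r + k) /
          (Real.Gamma lam * (r.factorial : ℝ) * (k.factorial : ℝ) *
            ((j - 2 * r - k).factorial : ℝ)) * x ^ k := by
  have hGl : Real.Gamma lam ≠ 0 := by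
    have := gamma_ne lam hlam hlam0 0
    simpa using this
  have hev : (shiftedMonicUltra lam j).eval x =
      Hcoef lam j * (gegen lam j).eval (2*x - 1) := by
    simp [shiftedMonicUltra, Polynomial.eval_comp]
  rw [hev, eval_gegen lam hlam hlam0 j (2*x-1)]
  congr 1
  -- shrink outer sum
  have hshrink : ∑ r ∈ Finset.range (j+1), cc lam j r * (2*x-1) ^ (j - 2*r) =
      ∑ r ∈ Finset.range (j/2 + 1), cc lam j r * (2*x-1) ^ (j - 2*r) := by
    symm
    apply Finset.sum_subset
    · intro r hr
      simp only [Finset.mem_range] at hr ⊢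
      omega
    · intro r _ hr
      simp only [Finset.mem_range, not_lt] at hr
      rw [cc_zero lam (by omega)]
      ring
  rw [hshrink]
  apply Finset.sum_congr rfl
  intro r hr
  simp only [Finset.mem_range] at hr
  have h2r : 2*r ≤ j := by omega
  rw [cc, if_pos h2r]
  set m := j - 2*r with hm
  have hbin : (2*x - 1) ^ m = ∑ k ∈ Finset.range (m+1),
      (2*x)^k * (-1:ℝ)^(m-k) * (m.choose k) := by
    have := add_pow (2*x) (-1:ℝ) m
    simpa [sub_eq_add_neg] using this
  rw [hbin, Finset.mul_sum]
  apply Finset.sum_congr rfl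
  intro k hk
  simp only [Finset.mem_range] at hk
  have hk' : k ≤ m := by omega
  have hc := Nat.choose_mul_factorial_mul_factorial hk'
  have hcr : ((m.choose k : ℕ):ℝ) * (k.factorial:ℝ) * ((m-k).factorial:ℝ) = (m.factorial:ℝ) := by
    exact_mod_cast congrArg (Nat.cast : ℕ → ℝ) hc
  have hsign : j - r - k = r + (m - k) := by omega
  have hpow : j - 2*r + k = m + k := by omega
  have hmk : j - 2*r - k = m - k := by omega
  rw [hsign, hpow, hmk, pow_add, pow_add, mul_pow]
  have hkf : ((k.factorial:ℝ)) ≠ 0 := by positivity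
  have hmkf : (((m-k).factorial:ℝ)) ≠ 0 := by positivity
  have hrf : ((r.factorial:ℝ)) ≠ 0 := by positivity
  have hmf : ((m.factorial:ℝ)) ≠ 0 := by positivity
  field_simp
  rw [← hcr]
  ring
end
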